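/- In the link graph Λ₁ of X₁: (i) every cycle containing one of the four new edges {a_0⁺,b_2⁻}, {b_2⁺,a_1⁺}, {a_1⁻,b_0⁺}, {b_0⁻,a_0⁻} has length at least 5 (the attached square creates no new circuits of length less than five); and (ii) each of the eight bridge edges {a_0⁺,a_1⁺}, {a_2⁺,a_1⁻}, {a_3⁺,a_2⁻}, {a_0⁻,a_3⁻}, {b_0⁺,b_1⁺}, {b_2⁺,b_1⁻}, {b_3⁺,b_2⁻}, {b_0⁻,b_3⁻} lies in no cycle of length 4. Hence the poison corners of each original LOT complex are still present in X₁, so every 2-cell of X₁ other than the attached square contains a poison corner. -/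

import Mathlib

/-- Vertices of the link graph `Λ₁` of `X₁`: `(false, i, ε)` stands for `a_i⁺`/`a_i⁻`
(according to `ε = true`/`false`) and `(true, i, ε)` stands for `b_i⁺`/`b_i⁻`. -/
abbrev Link1V : Type := Bool × Fin 5 × Bool

/-- `a_i⁺`. -/
def aP (i : Fin 5) : Link1V := (false, i, true)
/-- `a_i⁻`. -/
def aM (i : Fin 5) : Link1V := (false, i, false)
/-- `b_i⁺`. -/
def bP (i : Fin 5) : Link1V := (true, i, true)
/-- `b_i⁻`. -/
def bM (i : Fin 5) : Link1V := (true, i, false)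

/-- The thirty-six edges of the link graph `Λ₁` of the vertex of `X₁`: the sixteen
edges of the `a`-copy of the LOT link, the sixteen edges of the `b`-copy, and the four
new edges contributed by the square with boundary word `a₀ b₂ a₁⁻¹ b₀⁻¹`. -/
def link1Edges : List (Sym2 Link1V) :=
  [ s(aP 1, aM 0), s(aP 1, aP 2), s(aP 2, aP 3), s(aP 3, aM 0),
    s(aP 0, aP 1), s(aP 2, aM 1), s(aP 3, aM 2), s(aM 0, aM 3),
    s(aP 4, aP 0), s(aP 4, aM 1), s(aP 4, aM 2), s(aP 4, aM 3),
    s(aM 4, aP 0), s(aM 4, aM 1), s(aM 4, aM 2), s(aM 4, aM 3),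
    s(bP 1, bM 0), s(bP 1, bP 2), s(bP 2, bP 3), s(bP 3, bM 0),
    s(bP 0, bP 1), s(bP 2, bM 1), s(bP 3, bM 2), s(bM 0, bM 3),
    s(bP 4, bP 0), s(bP 4, bM 1), s(bP 4, bM 2), s(bP 4, bM 3),
    s(bM 4, bP 0), s(bM 4, bM 1), s(bM 4, bM 2), s(bM 4, bM 3),
    s(aP 0, bM 2), s(bP 2, aP 1), s(aM 1, bP 0), s(bM 0, aM 0) ]

/-- The link graph `Λ₁`. -/
def link1Graph : SimpleGraph Link1V :=
  SimpleGraph.fromEdgeSet {e | e ∈ link1Edges}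


/-- The four new edges of `Λ₁` contributed by the attached square `a₀ b₂ a₁⁻¹ b₀⁻¹`. -/
def newEdges : List (Sym2 Link1V) :=
  [ s(aP 0, bM 2), s(bP 2, aP 1), s(aM 1, bP 0), s(bM 0, aM 0) ]

/-- The eight bridge edges of `Λ₁` (four in each LOT copy). -/
def bridgeEdges1 : List (Sym2 Link1V) :=
  [ s(aP 0, aP 1), s(aP 2, aM 1), s(aP 3, aM 2), s(aM 0, aM 3),
    s(bP 0, bP 1), s(bP 2, bM 1), s(bP 3, bM 2), s(bM 0, bM 3) ]


open SimpleGraph Walk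

instance : DecidableRel link1Graph.Adj := fun u v =>
  decidable_of_iff (s(u,v) ∈ link1Edges ∧ u ≠ v) (by simp [link1Graph])


lemma cycle3 {V : Type*} [DecidableEq V] {G : SimpleGraph V} {x y v : V}
    (w : G.Walk v v) (hc : w.IsCycle) (he : s(x,y) ∈ w.edges) (hl : w.length = 3) :
    ∃ z, G.Adj x z ∧ G.Adj z y := by
  have hx : x ∈ w.support := w.fst_mem_support_of_mem_edges he
  have he' : s(x,y) ∈ (w.rotate x hx).edges := (w.rotate_edges x hx).mem_iff.mpr he
  have hl' : (w.rotate x hx).length = 3 := by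
    rw [← length_edges, (w.rotate_edges x hx).perm.length_eq, length_edges, hl]
  generalize hw : w.rotate x hx = w' at he' hl'
  clear hw he hl hc hx w
  cases w' with
  | nil => simp at hl'
  | cons h1 p => cases p with
    | nil => simp at hl'
    | cons h2 q => cases q with
      | nil => simp at hl'
      | cons h3 r => cases r with
        | cons h4 s => simp at hl'
        | nil =>
          rename_i c d
          simp only [edges_cons, edges_nil, List.mem_cons, List.not_mem_nil, or_false,
            Sym2.eq, Sym2.rel_iff', Prod.mk.injEq, Prod.swap_prod_mk] at he'
          rcases he' with (⟨-, rfl⟩ | ⟨h, rfl⟩) | (⟨h, rfl⟩ | ⟨h, rfl⟩) | (⟨h, rfl⟩ | ⟨-, rfl⟩)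
          · exact ⟨d, h3.symm, h2.symm⟩
          · exact absurd h h1.ne
          · exact absurd h h1.ne
          · exact absurd h.symm h3.ne
          · exact absurd h.symm h3.ne
          · exact ⟨c, h1, h2⟩



lemma cycle4 {V : Type*} [DecidableEq V] {G : SimpleGraph V} {x y v : V}
    (w : G.Walk v v) (hc : w.IsCycle) (he : s(x,y) ∈ w.edges) (hl : w.length = 4) :
    ∃ u z, G.Adj y u ∧ G.Adj u z ∧ G.Adj z x ∧ u ≠ x ∧ z ≠ y := by
  have hx : x ∈ w.support := w.fst_mem_support_of_mem_edges he
  have hc' := hc.rotate hx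
  have he' : s(x,y) ∈ (w.rotate x hx).edges := (w.rotate_edges x hx).mem_iff.mpr he
  have hl' : (w.rotate x hx).length = 4 := by
    rw [← length_edges, (w.rotate_edges x hx).perm.length_eq, length_edges, hl]
  generalize hw : w.rotate x hx = w' at he' hl' hc'
  clear hw he hl hc hx w
  cases w' with
  | nil => simp at hl'
  | cons h1 p => cases p with
    | nil => simp at hl'
    | cons h2 q => cases q with
      | nil => simp at hl'
      | cons h3 r => cases r with
        | nil => simp at hl'
        | cons h4 s => cases s with
          | cons h5 t => simp at hl'
          | nil =>
            rename_i c d e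
            have hnd := hc'.2
            simp only [support_cons, support_nil, List.tail_cons, List.nodup_cons,
              List.mem_cons, List.not_mem_nil, or_false, not_or, List.nodup_nil,
              and_true] at hnd
            obtain ⟨⟨hcd, hce, hcx⟩, ⟨hde, hdx⟩, hex, -⟩ := hnd
            have hdx' : d ≠ x := by tauto
            have hce' : e ≠ c := by tauto
            simp only [edges_cons, edges_nil, List.mem_cons, List.not_mem_nil, or_false,
              Sym2.eq, Sym2.rel_iff', Prod.mk.injEq, Prod.swap_prod_mk] at he'
            rcases he' with (⟨-, rfl⟩ | ⟨rfl, rfl⟩) | (⟨rfl, rfl⟩ | ⟨rfl, rfl⟩) |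
              (⟨rfl, rfl⟩ | ⟨rfl, rfl⟩) | (⟨rfl, rfl⟩ | ⟨-, rfl⟩)
            · exact ⟨d, e, h2, h3, h4, hdx', hce'⟩
            · simp_all
            · simp_all
            · simp_all
            · simp_all
            · simp_all
            · simp_all
            · exact ⟨d, c, h3.symm, h2.symm, h1.symm, hdx', hce⟩

lemma noC4 {x y : Link1V}
    (h4 : ¬ ∃ u z, link1Graph.Adj y u ∧ link1Graph.Adj u z ∧ link1Graph.Adj z x ∧
      u ≠ x ∧ z ≠ y)
    {v : Link1V} (w : link1Graph.Walk v v) (hc : w.IsCycle) (he : s(x,y) ∈ w.edges) :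
    w.length ≠ 4 := fun hl => h4 (cycle4 w hc he hl)

lemma noShort {x y : Link1V}
    (h3 : ¬ ∃ z, link1Graph.Adj x z ∧ link1Graph.Adj z y)
    (h4 : ¬ ∃ u z, link1Graph.Adj y u ∧ link1Graph.Adj u z ∧ link1Graph.Adj z x ∧
      u ≠ x ∧ z ≠ y)
    {v : Link1V} (w : link1Graph.Walk v v) (hc : w.IsCycle) (he : s(x,y) ∈ w.edges) :
    5 ≤ w.length := by
  by_contra hlt
  push_neg at hlt
  have hge := hc.three_le_length
  have : w.length = 3 ∨ w.length = 4 := by omega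
  rcases this with hl | hl
  · exact h3 (cycle3 w hc he hl)
  · exact h4 (cycle4 w hc he hl)

set_option maxHeartbeats 4000000

/-- In the link graph `Λ₁` of `X₁`: (i) every cycle containing one of
the four new edges has length at least 5 (the attached square creates no new circuits
of length less than five); and (ii) each of the eight bridge edges lies in no cycle of
length 4.  Hence the poison corners of each original LOT complex are still present
in `X₁`. -/
theorem new_edges_and_bridges_in_link1 :
    (∀ e ∈ newEdges, ∀ (v : Link1V) (w : link1Graph.Walk v v),
        w.IsCycle → e ∈ w.edges → 5 ≤ w.length) ∧
    (∀ e ∈ bridgeEdges1, ∀ (v : Link1V) (w : link1Graph.Walk v v),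
        w.IsCycle → e ∈ w.edges → w.length ≠ 4) := by
  constructor
  · intro e he v w hc hew
    simp only [newEdges, List.mem_cons, List.not_mem_nil, or_false] at he
    rcases he with rfl | rfl | rfl | rfl <;>
      exact noShort (by decide) (by decide) w hc hew
  · intro e he v w hc hew
    simp only [bridgeEdges1, List.mem_cons, List.not_mem_nil, or_false] at he
    rcases he with rfl | rfl | rfl | rfl | rfl | rfl | rfl | rfl <;>
      exact noC4 (by decide) w hc hew
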